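/- Let Z be an integral domain, p ∈ Z a nonzero nonunit, and P ∈ Z[T, Y_1,…,Y_n] written as P = Σ_{i=0}^{r} Z_i(Y) T^i with Z_r ≠ 0. Let d_1,…,d_n ≥ 0 with Σ_j d_j > deg_Y(P). If P(Y_1^{d_1}⋯Y_n^{d_n}, Y_1,…,Y_n) ≡ 0 (mod p), then Z_i(Y) ≡ 0 (mod p) for all i, i.e., p divides P. -/

import Mathlib

open MvPolynomial

theorem stmt_11 {Z : Type*} [CommRing Z] [IsDomain Z] (p : Z) (hp : p ≠ 0)
    (hpu : ¬ IsUnit p) (n : ℕ) (P : Polynomial (MvPolynomial (Fin n) Z))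
    (d : Fin n → ℕ)
    (hdeg : ∀ i, (P.coeff i).totalDegree < ∑ j, d j)
    (hdvd : ∀ m : Fin n →₀ ℕ, p ∣ coeff m
      (Polynomial.eval
        (monomial (Finsupp.equivFunOnFinite.symm d) 1 : MvPolynomial (Fin n) Z) P)) :
    ∀ i, ∀ m : Fin n →₀ ℕ, p ∣ coeff m (P.coeff i) := by
  classical
  intro i m
  set D : Fin n →₀ ℕ := Finsupp.equivFunOnFinite.symm d with hDdef
  have hDval : ∀ j, D j = d j := fun j => rfl
  set S := ∑ j, d j with hSdef
  have hsum : ∀ m' : Fin n →₀ ℕ, (∑ j ∈ m'.support, m' j) = ∑ j, m' j := by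
    intro m'
    apply Finset.sum_subset (Finset.subset_univ _)
    intro x _ hx
    exact Finsupp.notMem_support_iff.mp hx
  by_cases hm : S ≤ ∑ j, m j
  · have : coeff m (P.coeff i) = 0 := by
      apply coeff_eq_zero_of_totalDegree_lt
      rw [hsum]
      exact lt_of_lt_of_le (hdeg i) hm
    simp [this]
  · push_neg at hm
    have hS1 : 1 ≤ S := Nat.one_le_iff_ne_zero.mpr (by
      intro h; exact Nat.not_lt_zero _ (h ▸ hdeg i))
    have key : coeff (m + i • D) (Polynomial.eval (monomial D 1) P)
        = coeff m (P.coeff i) := by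
      rw [Polynomial.eval_eq_sum, Polynomial.sum, coeff_sum]
      have hterm : ∀ k, coeff (m + i • D) (P.coeff k * (monomial D 1) ^ k)
          = if k = i then coeff m (P.coeff i) else 0 := by
        intro k
        rw [monomial_pow, one_pow, coeff_mul_monomial']
        rcases lt_trichotomy k i with hk | hk | hk
        · have hle : k • D ≤ m + i • D := by
            rw [Finsupp.le_def]
            intro j
            simp only [Finsupp.smul_apply, Finsupp.add_apply, smul_eq_mul]
            have : k * D j ≤ i * D j := Nat.mul_le_mul_right _ hk.le
            omega
          rw [if_pos hle]
          have hz : coeff (m + i • D - k • D) (P.coeff k) = 0 := by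
            apply coeff_eq_zero_of_totalDegree_lt
            rw [hsum]
            have hb : ∀ j, (i - k) * d j ≤ (m + i • D - k • D) j := by
              intro j
              simp only [Finsupp.tsub_apply, Finsupp.add_apply, Finsupp.smul_apply,
                smul_eq_mul, hDval]
              calc (i - k) * d j = i * d j - k * d j := Nat.sub_mul i k (d j)
                _ ≤ m j + i * d j - k * d j :=
                  Nat.sub_le_sub_right (Nat.le_add_left _ _) _
            calc (P.coeff k).totalDegree < S := hdeg k
              _ ≤ (i - k) * S := Nat.le_mul_of_pos_left _ (by omega)
              _ = ∑ j, (i - k) * d j := by rw [Finset.mul_sum]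
              _ ≤ ∑ j, (m + i • D - k • D) j := Finset.sum_le_sum fun j _ => hb j
          rw [hz, zero_mul, if_neg (by omega : ¬ k = i)]
        · subst hk
          rw [if_pos rfl, if_pos (le_add_self), add_tsub_cancel_right, mul_one]
        · have hnle : ¬ (k • D ≤ m + i • D) := by
            intro hle
            rw [Finsupp.le_def] at hle
            have h1 : ∑ j, k * D j ≤ ∑ j, (m j + i * D j) := by
              apply Finset.sum_le_sum
              intro j _
              have := hle j
              simp only [Finsupp.smul_apply, Finsupp.add_apply, smul_eq_mul] at this
              omega
            have h2 : (∑ j, k * D j) = k * S := by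
              rw [← Finset.mul_sum]; simp [hDval, hSdef]
            have h3 : (∑ j, (m j + i * D j)) = (∑ j, m j) + i * S := by
              rw [Finset.sum_add_distrib, ← Finset.mul_sum]; simp [hDval, hSdef]
            rw [h2, h3] at h1
            have : (k - i) * S ≤ ∑ j, m j := by
              rw [Nat.sub_mul]; omega
            have : S ≤ ∑ j, m j :=
              le_trans (Nat.le_mul_of_pos_left _ (by omega)) this
            omega
          rw [if_neg hnle, if_neg (by omega : ¬ k = i)]
      rw [Finset.sum_congr rfl fun k _ => hterm k]
      by_cases hi : i ∈ P.support
      · rw [Finset.sum_ite_eq' P.support i (fun _ => coeff m (P.coeff i)), if_pos hi]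
      · rw [Finset.sum_ite_eq' P.support i (fun _ => coeff m (P.coeff i)), if_neg hi]
        rw [Polynomial.notMem_support_iff.mp hi]
        simp
    rw [← key]
    exact hdvd (m + i • D)
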